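/- Let s ≥ 7 be an integer, let m_1,…,m_s be nonnegative integers, not all zero, and let d be an integer with d ≥ m_j for every j. Set m := (m_1 + … + m_s)/s. If C(d+3, 3) − Σ_{j=1}^s (1/6)·(3d − 2m_j + 5)·m_j·(m_j + 1) > 0, then d/m ≥ g_{3,1,s}, where g_{3,1,s} is the unique real root ≥ 1 of the polynomial x^3 − 3sx + 2s. -/

import Mathlib

section Stmt12Aux

private lemma stmt12_g_sq (s : ℕ) (g : ℝ) (hg1 : 1 ≤ g)
    (hg : g ^ 3 - 3 * (s : ℝ) * g + 2 * (s : ℝ) = 0) : (s : ℝ) ≤ g ^ 2 := by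
  have hs0 : (0:ℝ) ≤ (s:ℝ) := Nat.cast_nonneg s
  nlinarith [mul_nonneg hs0 (sub_nonneg.mpr hg1), sq_nonneg g]

private lemma stmt12_g_ub (s : ℕ) (g c : ℝ) (hg1 : 1 ≤ g)
    (hg : g ^ 3 - 3 * (s : ℝ) * g + 2 * (s : ℝ) = 0)
    (hcs : (s : ℝ) ≤ c ^ 2) (hc0 : 0 ≤ c)
    (hL : 0 < c ^ 3 - 3 * (s : ℝ) * c + 2 * (s : ℝ)) : g < c := by
  by_contra h
  push_neg at h
  have h2 := stmt12_g_sq s g hg1 hg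
  nlinarith [mul_nonneg (sub_nonneg.mpr h) (by nlinarith : (0:ℝ) ≤ g^2 + g*c + c^2 - 3*s)]

private lemma stmt12_g_lb (s : ℕ) (g c : ℝ) (hg1 : 1 ≤ g)
    (hg : g ^ 3 - 3 * (s : ℝ) * g + 2 * (s : ℝ) = 0)
    (hc0 : 0 ≤ c)
    (hL : c ^ 3 - 3 * (s : ℝ) * c + 2 * (s : ℝ) < 0) : c < g := by
  by_contra h
  push_neg at h
  have h2 := stmt12_g_sq s g hg1 hg
  have hg0 : (0:ℝ) ≤ g := by linarith
  nlinarith [mul_nonneg (sub_nonneg.mpr h)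
    (by nlinarith [mul_le_mul_of_nonneg_left h hg0] : (0:ℝ) ≤ c^2 + c*g + g^2 - 3*s)]

private lemma stmt12_deficit (c D g d : ℝ) (hc4 : 4 ≤ c) (hcg : c ≤ g) (hD2 : 2 ≤ D) (hDd : D ≤ d)
    (hslope : 0 ≤ 6*(c-1)*(c-4)*D + 5*c^2 - 33*c + 22)
    (hval : 0 ≤ 3*(c-1)*(c-4)*D^2 + (5*c^2-33*c+22)*D + 12 - 18*c) :
    0 ≤ 3*(g-1)*(g-4)*d^2 + (5*g^2-33*g+22)*d + 12 - 18*g := by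
  have hd2 : 2 ≤ d := le_trans hD2 hDd
  have h1 : 0 ≤ (g - c) * (3*d^2*(g+c-5) + 5*d*(g+c) - 33*d - 18) := by
    apply mul_nonneg (by linarith)
    nlinarith [sq_nonneg d]
  have h2 : 0 ≤ (d - D) * (3*(c-1)*(c-4)*(d+D) + 5*c^2 - 33*c + 22) := by
    apply mul_nonneg (by linarith)
    nlinarith [mul_nonneg (mul_nonneg (by linarith : (0:ℝ) ≤ 3*(c-1)) (by linarith : (0:ℝ) ≤ c-4))
      (by linarith : (0:ℝ) ≤ d - D)]
  nlinarith [h1, h2]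

private lemma stmt12_beta (c D g d m : ℝ) (hc4 : 4 ≤ c) (hcg : c ≤ g) (hD2 : 2 ≤ D) (hDd : D ≤ d)
    (hslope : 0 ≤ 6*(c-1)*(c-4)*D + 5*c^2 - 33*c + 22)
    (hval : 0 ≤ 3*(c-1)*(c-4)*D^2 + (5*c^2-33*c+22)*D + 12 - 18*c)
    (hm0 : 0 ≤ m) (hm4 : 4*m ≤ d + 5) (hgm : d ≤ g*m) :
    (3*g-2)*((d+1)*(d+2)*(d+3)) ≤ g^3*((3*d-2*m+5)*m*(m+1)) := by
  have hd2 : 2 ≤ d := le_trans hD2 hDd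
  have hg4 : 4 ≤ g := le_trans hc4 hcg
  have hQ : 0 ≤ -2*g^2*m^2 - 2*g*m*d - 2*d^2 + 3*(d+1)*g^2*m + 3*(d+1)*g*d + 3*d*g^2 + 5*g^2 := by
    have h1 : 0 ≤ m*(3*d+3-2*m) := by
      apply mul_nonneg hm0; linarith
    have h2 : (0:ℝ) ≤ g^2 := sq_nonneg g
    have h3 : 0 ≤ (g-4)*d*(3*d+3-2*m) := by
      apply mul_nonneg (mul_nonneg (by linarith) (by linarith)); linarith
    nlinarith [mul_nonneg h2 h1, h3, sq_nonneg (g*m - d)]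
  have hdef := stmt12_deficit c D g d hc4 hcg hD2 hDd hslope hval
  have hgmd : 0 ≤ (g*m - d) := by linarith
  nlinarith [mul_nonneg hgmd hQ, hdef]

private lemma stmt12_gamma (sR d b : ℝ) (hs : 7 ≤ sR) (hd : 2 ≤ d) (hb1 : d + 2 ≤ 4*b)
    (hb2 : 4*b ≤ d + 5) :
    (d+1)*(d+2)*(d+3) ≤ sR * ((3*d-2*b+5)*b*(b+1)) := by
  have hb0 : 0 ≤ b := by linarith
  have hfb : 0 ≤ (3*d-2*b+5)*b*(b+1) := by
    apply mul_nonneg (mul_nonneg (by linarith) hb0); linarith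
  have h7 : 7 * ((3*d-2*b+5)*b*(b+1)) ≤ sR * ((3*d-2*b+5)*b*(b+1)) :=
    mul_le_mul_of_nonneg_right hs hfb
  nlinarith [mul_nonneg (sub_nonneg.mpr hb1) (sub_nonneg.mpr hb2),
    mul_nonneg (mul_nonneg (sub_nonneg.mpr hb1) (sub_nonneg.mpr hb2)) (by linarith : (0:ℝ) ≤ d),
    mul_nonneg (sub_nonneg.mpr hb1) (by linarith : (0:ℝ) ≤ d),
    mul_nonneg (mul_nonneg (sub_nonneg.mpr hb1) (by linarith : (0:ℝ) ≤ d)) (by linarith : (0:ℝ) ≤ d),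
    sq_nonneg (4*b - d - 2), mul_nonneg (sub_nonneg.mpr hb2) (by linarith : (0:ℝ) ≤ d)]

private lemma stmt12_chordR (d a m : ℝ) (hd : 2 ≤ d) (ha : 4*a ≤ d+1) (h1 : a ≤ m) (h2 : m ≤ a+1) :
    (3*d-2*m+5)*m*(m+1) ≤ (3*d-2*a+5)*a*(a+1) + 6*(a+1)*(d-a+1)*(m-a) := by
  have key : 0 ≤ (m-a)*(a+1-m)*(3*d+1-4*a-2*m) := by
    apply mul_nonneg (mul_nonneg (by linarith) (by linarith)); linarith
  nlinarith [key]

private lemma stmt12_chord_nat (d a n : ℕ) (hn : n ≤ d) (ha : 4*a ≤ d+1) :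
    (3*(d:ℝ)-2*(a:ℝ)+5)*(a:ℝ)*((a:ℝ)+1) + 6*((a:ℝ)+1)*((d:ℝ)-(a:ℝ)+1)*((n:ℝ)-(a:ℝ))
      ≤ (3*(d:ℝ)-2*(n:ℝ)+5)*(n:ℝ)*((n:ℝ)+1) := by
  have h1 : (0:ℝ) ≤ ((n:ℝ)-a)*((n:ℝ)-a-1) := by
    rcases le_or_gt n a with h | h
    · have : (n:ℝ) ≤ a := by exact_mod_cast h
      nlinarith
    · have : (a:ℝ) + 1 ≤ n := by exact_mod_cast h
      nlinarith
  have h2 : (0:ℝ) ≤ 3*(d:ℝ)+1-4*(a:ℝ)-2*(n:ℝ) := by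
    have c1 : (n:ℝ) ≤ d := by exact_mod_cast hn
    have c2 : 4*(a:ℝ) ≤ (d:ℝ)+1 := by exact_mod_cast ha
    linarith
  nlinarith [mul_nonneg h1 h2]

set_option maxHeartbeats 1000000 in
private lemma stmt12_real_case (s d M : ℕ) (g c D : ℝ)
    (hs7 : 7 ≤ s)
    (hc4 : 4 ≤ c) (hcg : c ≤ g) (hD2 : 2 ≤ D) (hDd : D ≤ (d:ℝ))
    (hslope : 0 ≤ 6*(c-1)*(c-4)*D + 5*c^2 - 33*c + 22)
    (hval : 0 ≤ 3*(c-1)*(c-4)*D^2 + (5*c^2-33*c+22)*D + 12 - 18*c)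
    (hg3 : g ^ 3 - 3 * (s : ℝ) * g + 2 * (s : ℝ) = 0)
    (hgM : (s:ℝ)*(d:ℝ) < g*(M:ℝ))
    (hKEY : ∀ a : ℕ, 4*a ≤ d+1 →
      (s:ℝ)*((3*(d:ℝ)-2*(a:ℝ)+5)*(a:ℝ)*((a:ℝ)+1)) + 6*((a:ℝ)+1)*((d:ℝ)-(a:ℝ)+1)*((M:ℝ)-(s:ℝ)*(a:ℝ))
        < ((d:ℝ)+1)*((d:ℝ)+2)*((d:ℝ)+3)) : False := by
  have hs0 : 0 < s := by omega
  have hsR : (0:ℝ) < (s:ℝ) := by exact_mod_cast hs0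
  have hs7R : (7:ℝ) ≤ (s:ℝ) := by exact_mod_cast hs7
  have hdR2 : (2:ℝ) ≤ (d:ℝ) := le_trans hD2 hDd
  have hg4 : (4:ℝ) ≤ g := le_trans hc4 hcg
  set m : ℝ := (M:ℝ)/(s:ℝ) with hm_def
  have hMm : (M:ℝ) = (s:ℝ)*m := by rw [hm_def]; field_simp
  have hm0 : 0 ≤ m := by positivity
  have hgm : (d:ℝ) ≤ g*m := by
    have h1 : (d:ℝ) ≤ (g*(M:ℝ))/(s:ℝ) := (le_div_iff₀ hsR).mpr (by nlinarith [hgM])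
    have h2 : g*(M:ℝ)/(s:ℝ) = g*m := by rw [hm_def]; ring
    linarith
  set a : ℕ := min (M / s) ((d+1)/4) with ha_def
  have ha4 : 4*a ≤ d + 1 := by
    have : a ≤ (d+1)/4 := min_le_right _ _
    omega
  have ham : (a:ℝ) ≤ m := by
    have h1 : a ≤ M / s := min_le_left _ _
    have h2 : s * a ≤ M :=
      le_trans (Nat.mul_le_mul_left s h1) (by rw [mul_comm]; exact Nat.div_mul_le_self M s)
    rw [hm_def, le_div_iff₀ hsR]
    have h3 : ((s*a : ℕ):ℝ) ≤ (M:ℝ) := by exact_mod_cast h2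
    push_cast at h3; linarith
  have hk := hKEY a ha4
  have ha4R : 4*(a:ℝ) ≤ (d:ℝ)+1 := by exact_mod_cast ha4
  have h3g2 : (0:ℝ) < 3*g - 2 := by linarith
  have hgs : g^3 = (s:ℝ)*(3*g-2) := by nlinarith [hg3]
  rw [hMm] at hk
  rcases le_or_gt m ((a:ℝ)+1) with hma | hma
  · have hch := stmt12_chordR (d:ℝ) (a:ℝ) m hdR2 ha4R ham hma
    have hb := stmt12_beta c D g (d:ℝ) m hc4 hcg hD2 hDd hslope hval hm0 (by linarith) hgm
    rw [hgs] at hb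
    have hfm : ((d:ℝ)+1)*((d:ℝ)+2)*((d:ℝ)+3) ≤ (s:ℝ)*((3*(d:ℝ)-2*m+5)*m*(m+1)) := by
      by_contra hcon
      push_neg at hcon
      nlinarith [hb, mul_lt_mul_of_pos_left hcon h3g2]
    have hchs := mul_le_mul_of_nonneg_left hch (le_of_lt hsR)
    linarith [hk, hfm, hchs]
  · have hcap : d ≤ 4*a + 2 := by
      rcases min_cases (M / s) ((d+1)/4) with ⟨he, hle⟩ | ⟨he, hle⟩
      · exfalso
        have hlt : M < (M/s + 1) * s := (Nat.div_lt_iff_lt_mul hs0).mp (Nat.lt_succ_self _)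
        have haMs : a = M / s := by rw [ha_def, he]
        have hltR : (M:ℝ) < ((a:ℕ):ℝ)*(s:ℝ) + (s:ℝ) := by
          rw [haMs]
          have he2 : ((M/s + 1) * s : ℕ) = (M/s)*s + s := by ring
          exact_mod_cast lt_of_lt_of_le hlt (le_of_eq he2)
        have : m < (a:ℝ) + 1 := by
          rw [hm_def, div_lt_iff₀ hsR]; nlinarith [hltR]
        linarith
      · have haMs : a = (d+1)/4 := by rw [ha_def, he]
        omega
    have hcapR : (d:ℝ) + 2 ≤ 4*((a:ℝ)+1) := by
      have : (d:ℝ) ≤ 4*(a:ℝ) + 2 := by exact_mod_cast hcap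
      linarith
    have hgB := stmt12_gamma (s:ℝ) (d:ℝ) ((a:ℝ)+1) hs7R hdR2 hcapR (by linarith)
    have hslope0 : (0:ℝ) ≤ 6*((a:ℝ)+1)*((d:ℝ)-(a:ℝ)+1) := by
      have ha0 : (0:ℝ) ≤ (a:ℝ) := Nat.cast_nonneg a
      have h2 : (0:ℝ) ≤ (d:ℝ)-(a:ℝ)+1 := by linarith
      have h1 : (0:ℝ) ≤ 6*((a:ℝ)+1) := by linarith
      exact mul_nonneg h1 h2
    have hstep : 6*((a:ℝ)+1)*((d:ℝ)-(a:ℝ)+1)*((s:ℝ)*1) ≤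
        6*((a:ℝ)+1)*((d:ℝ)-(a:ℝ)+1)*((s:ℝ)*m - (s:ℝ)*(a:ℝ)) := by
      apply mul_le_mul_of_nonneg_left _ hslope0
      nlinarith [hma, hsR]
    nlinarith [hk, hgB, hstep]

end Stmt12Aux

set_option maxHeartbeats 4000000 in
/-- Let `s ≥ 7`, let `m_1,…,m_s ≥ 0` be integers, not all zero, and let `d`
be an integer with `d ≥ m_j` for all `j`. Set `m = (Σ_j m_j)/s`. If
`C(d+3, 3) − Σ_j (1/6)·(3d − 2m_j + 5)·m_j·(m_j + 1) > 0`, then `d/m ≥ g_{3,1,s}`, where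
`g_{3,1,s}` is the unique real root `≥ 1` of `x^3 − 3sx + 2s`. -/
theorem stmt_12 (s : ℕ) (hs : 7 ≤ s) (mj : Fin s → ℕ) (hnz : ∃ j, mj j ≠ 0)
    (d : ℕ) (hd : ∀ j, mj j ≤ d)
    (g : ℝ) (hg1 : 1 ≤ g) (hg : g ^ 3 - 3 * (s : ℝ) * g + 2 * (s : ℝ) = 0)
    (hP : 0 < (Nat.choose (d + 3) 3 : ℝ) -
      ∑ j, (1 / 6 : ℝ) * (3 * (d : ℝ) - 2 * (mj j : ℝ) + 5) * (mj j : ℝ) * ((mj j : ℝ) + 1)) :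
    (d : ℝ) / ((∑ j, (mj j : ℝ)) / (s : ℝ)) ≥ g := by
  classical
  set M : ℕ := ∑ j, mj j with hM_def
  obtain ⟨j0, hj0⟩ := hnz
  have hmj0 : 1 ≤ mj j0 := Nat.one_le_iff_ne_zero.mpr hj0
  have hM1 : 1 ≤ M := le_trans hmj0 (Finset.single_le_sum (fun j _ => Nat.zero_le _) (Finset.mem_univ j0))
  have hd1 : 1 ≤ d := le_trans hmj0 (hd j0)
  have hs0 : 0 < s := by omega
  have hsR : (0:ℝ) < (s:ℝ) := by exact_mod_cast hs0
  have hMR : (∑ j, (mj j : ℝ)) = (M:ℝ) := by rw [hM_def]; push_cast; ring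
  have hC : ((Nat.choose (d+3) 3 : ℕ) : ℝ) = ((d:ℝ)+1)*((d:ℝ)+2)*((d:ℝ)+3)/6 := by
    have hdvd : 6 ∣ (d+3).descFactorial 3 := by
      have h0 := Nat.factorial_dvd_descFactorial (d+3) 3
      have he : Nat.factorial 3 = 6 := rfl
      rwa [he] at h0
    have h2 : (d+3).descFactorial 3 = (d+1)*((d+2)*(d+3)) := by
      simp [Nat.descFactorial, Nat.add_sub_cancel]
    have h1 : (d+3).choose 3 * 6 = (d+1)*((d+2)*(d+3)) := by
      have h3 : (d+3).choose 3 = (d+3).descFactorial 3 / 6 := by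
        rw [Nat.choose_eq_descFactorial_div_factorial]
        norm_num [show Nat.factorial 3 = 6 from rfl]
      rw [h3, Nat.div_mul_cancel hdvd, h2]
    have h1R : ((Nat.choose (d+3) 3 : ℕ) : ℝ) * 6 = ((d:ℝ)+1)*(((d:ℝ)+2)*((d:ℝ)+3)) := by
      exact_mod_cast congrArg (Nat.cast : ℕ → ℝ) h1
    linarith [h1R]
  have hsum : ∑ j, (3*(d:ℝ) - 2*(mj j:ℝ) + 5)*(mj j:ℝ)*((mj j:ℝ)+1)
      < ((d:ℝ)+1)*((d:ℝ)+2)*((d:ℝ)+3) := by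
    have he : ∑ j, (1 / 6 : ℝ) * (3 * (d : ℝ) - 2 * (mj j : ℝ) + 5) * (mj j : ℝ) * ((mj j : ℝ) + 1)
        = (1/6) * ∑ j, (3*(d:ℝ) - 2*(mj j:ℝ) + 5)*(mj j:ℝ)*((mj j:ℝ)+1) := by
      rw [Finset.mul_sum]
      exact Finset.sum_congr rfl (fun j _ => by ring)
    rw [he, hC] at hP
    linarith
  have hKEY : ∀ a : ℕ, 4*a ≤ d+1 →
      (s:ℝ)*((3*(d:ℝ)-2*(a:ℝ)+5)*(a:ℝ)*((a:ℝ)+1)) + 6*((a:ℝ)+1)*((d:ℝ)-(a:ℝ)+1)*((M:ℝ)-(s:ℝ)*(a:ℝ))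
        < ((d:ℝ)+1)*((d:ℝ)+2)*((d:ℝ)+3) := by
    intro a ha
    have hpt : ∀ j ∈ Finset.univ (α := Fin s),
        (3*(d:ℝ)-2*(a:ℝ)+5)*(a:ℝ)*((a:ℝ)+1) + 6*((a:ℝ)+1)*((d:ℝ)-(a:ℝ)+1)*((mj j:ℝ)-(a:ℝ))
          ≤ (3*(d:ℝ)-2*(mj j:ℝ)+5)*(mj j:ℝ)*((mj j:ℝ)+1) :=
      fun j _ => stmt12_chord_nat d a (mj j) (hd j) ha
    have hsum2 := Finset.sum_le_sum hpt
    have heval : ∑ _j : Fin s, ((3*(d:ℝ)-2*(a:ℝ)+5)*(a:ℝ)*((a:ℝ)+1))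
        = (s:ℝ)*((3*(d:ℝ)-2*(a:ℝ)+5)*(a:ℝ)*((a:ℝ)+1)) := by
      rw [Finset.sum_const, Finset.card_univ, Fintype.card_fin, nsmul_eq_mul]
    have heval2 : ∑ j : Fin s, (((3*(d:ℝ)-2*(a:ℝ)+5)*(a:ℝ)*((a:ℝ)+1)) + 6*((a:ℝ)+1)*((d:ℝ)-(a:ℝ)+1)*((mj j:ℝ)-(a:ℝ)))
        = (s:ℝ)*((3*(d:ℝ)-2*(a:ℝ)+5)*(a:ℝ)*((a:ℝ)+1)) + 6*((a:ℝ)+1)*((d:ℝ)-(a:ℝ)+1)*((M:ℝ)-(s:ℝ)*(a:ℝ)) := by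
      rw [Finset.sum_add_distrib, heval, ← Finset.mul_sum, Finset.sum_sub_distrib,
        Finset.sum_const, Finset.card_univ, Fintype.card_fin, nsmul_eq_mul, hMR]
    rw [heval2] at hsum2
    linarith [hsum, hsum2]
  have hKEYz : ∀ a : ℕ, 4*a ≤ d+1 →
      (s:ℤ)*((3*(d:ℤ)-2*(a:ℤ)+5)*(a:ℤ)*((a:ℤ)+1)) + 6*((a:ℤ)+1)*((d:ℤ)-(a:ℤ)+1)*((M:ℤ)-(s:ℤ)*(a:ℤ))
        < ((d:ℤ)+1)*((d:ℤ)+2)*((d:ℤ)+3) := by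
    intro a ha
    have := hKEY a ha
    exact_mod_cast this
  by_contra hcon
  push_neg at hcon
  rw [hMR] at hcon
  have hMposR : (0:ℝ) < (M:ℝ) := by exact_mod_cast hM1
  have hM1R : (1:ℝ) ≤ (M:ℝ) := by exact_mod_cast hM1
  have hMs0 : (0:ℝ) < (M:ℝ)/(s:ℝ) := by positivity
  have hgM : (s:ℝ)*(d:ℝ) < g*(M:ℝ) := by
    have h2 : (d:ℝ) < g*((M:ℝ)/(s:ℝ)) := (div_lt_iff₀ hMs0).mp hcon
    have h3 : g*((M:ℝ)/(s:ℝ)) * (s:ℝ) = g*(M:ℝ) := by field_simp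
    nlinarith [mul_lt_mul_of_pos_right h2 hsR]
  -- now forget the configuration
  clear_value M
  clear hM_def hMR hP hsum hcon hC hmj0 hj0 hd j0 mj
  -- basic facts about g
  have hg2 : (s:ℝ) ≤ g^2 := stmt12_g_sq s g hg1 hg
  have hg3s : g^2 < 3*(s:ℝ) := by nlinarith [hg, hg1, hsR]
  have hs7R : (7:ℝ) ≤ (s:ℝ) := by exact_mod_cast hs
  have hgs' : g < (s:ℝ) := by nlinarith [hg2, hg3s, hs7R, hg1]
  by_cases hd3 : d ≤ 3
  · interval_cases d
    · -- d = 1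
      have k := hKEYz 0 (by norm_num)
      norm_num at k
      have hMeq : M = 1 := by omega
      rw [hMeq] at hgM
      push_cast at hgM
      linarith [hgs', hgM]
    · -- d = 2
      have k := hKEYz 0 (by norm_num)
      norm_num at k
      have hM3 : (M:ℝ) ≤ 3 := by exact_mod_cast (by omega : M ≤ 3)
      push_cast at hgM
      have h1 : 2*(s:ℝ) < g*(M:ℝ) := by linarith [hgM]
      have h0 : (0:ℝ) ≤ 2*(s:ℝ) := by linarith
      have hsq : (2*(s:ℝ))*(2*(s:ℝ)) < (g*(M:ℝ))*(g*(M:ℝ)) := mul_lt_mul'' h1 h1 h0 h0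
      have e2 : (g*g)*((M:ℝ)*(M:ℝ)) ≤ (g*g)*9 := by
        have hm9 : (M:ℝ)*(M:ℝ) ≤ 9 := by nlinarith [hM3, hM1R]
        have hgg : (0:ℝ) ≤ g*g := mul_self_nonneg g
        nlinarith [mul_le_mul_of_nonneg_left hm9 hgg]
      have e3 : (g*g)*9 < (3*(s:ℝ))*9 := by nlinarith [hg3s]
      nlinarith [hsq, e2, e3, hs7R]
    · -- d = 3
      have k := hKEYz 0 (by norm_num)
      norm_num at k
      have hM4 : (M:ℝ) ≤ 4 := by exact_mod_cast (by omega : M ≤ 4)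
      push_cast at hgM
      have h1 : 3*(s:ℝ) < g*(M:ℝ) := by linarith [hgM]
      have h0 : (0:ℝ) ≤ 3*(s:ℝ) := by linarith
      have hsq : (3*(s:ℝ))*(3*(s:ℝ)) < (g*(M:ℝ))*(g*(M:ℝ)) := mul_lt_mul'' h1 h1 h0 h0
      have e2 : (g*g)*((M:ℝ)*(M:ℝ)) ≤ (g*g)*16 := by
        have hm16 : (M:ℝ)*(M:ℝ) ≤ 16 := by nlinarith [hM4, hM1R]
        have hgg : (0:ℝ) ≤ g*g := mul_self_nonneg g
        nlinarith [mul_le_mul_of_nonneg_left hm16 hgg]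
      have e3 : (g*g)*16 < (3*(s:ℝ))*16 := by nlinarith [hg3s]
      nlinarith [hsq, e2, e3, hs7R]
  · push_neg at hd3
    by_cases hs12 : s ≤ 12
    · interval_cases s
      · -- s = 7
        by_cases hd16 : d ≤ 16
        · have hub : g < 98/23 :=
            stmt12_g_ub 7 g (98/23) hg1 hg (by norm_num) (by norm_num) (by norm_num)
          have hMlin : 23*d < 14*M := by
            have hM0R : (0:ℝ) ≤ (M:ℝ) := Nat.cast_nonneg M
            have h1 : g*(M:ℝ) ≤ (98/23)*(M:ℝ) := mul_le_mul_of_nonneg_right (le_of_lt hub) hM0R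
            have h2 : (23:ℝ)*(d:ℝ) < 14*(M:ℝ) := by push_cast at hgM; linarith
            exact_mod_cast h2
          interval_cases d
          · have k := hKEYz 0 (by norm_num); norm_num at k; omega
          · have k := hKEYz 1 (by norm_num); norm_num at k; omega
          · have k := hKEYz 1 (by norm_num); norm_num at k; omega
          · have k := hKEYz 1 (by norm_num); norm_num at k; omega
          · have k := hKEYz 1 (by norm_num); norm_num at k; omega
          · have k := hKEYz 2 (by norm_num); norm_num at k; omega
          · have k := hKEYz 2 (by norm_num); norm_num at k; omega
          · have k := hKEYz 2 (by norm_num); norm_num at k; omega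
          · have k := hKEYz 2 (by norm_num); norm_num at k; omega
          · have k := hKEYz 2 (by norm_num); norm_num at k; omega
          · have k := hKEYz 2 (by norm_num); norm_num at k; omega
          · have k := hKEYz 3 (by norm_num); norm_num at k; omega
          · have k := hKEYz 3 (by norm_num); norm_num at k; omega
        · push_neg at hd16
          exact stmt12_real_case 7 d M g (21/5) 17 (by norm_num) (by norm_num)
            (le_of_lt (stmt12_g_lb 7 g (21/5) hg1 hg (by norm_num) (by norm_num)))
            (by norm_num) (by exact_mod_cast hd16) (by norm_num) (by norm_num) hg hgM hKEY
      · -- s = 8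
        by_cases hd6 : d ≤ 6
        · have hub : g < 41/9 :=
            stmt12_g_ub 8 g (41/9) hg1 hg (by norm_num) (by norm_num) (by norm_num)
          have hMlin : 72*d < 41*M := by
            have hM0R : (0:ℝ) ≤ (M:ℝ) := Nat.cast_nonneg M
            have h1 : g*(M:ℝ) ≤ (41/9)*(M:ℝ) := mul_le_mul_of_nonneg_right (le_of_lt hub) hM0R
            have h2 : (72:ℝ)*(d:ℝ) < 41*(M:ℝ) := by push_cast at hgM; linarith
            exact_mod_cast h2
          interval_cases d
          · have k := hKEYz 0 (by norm_num); norm_num at k; omega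
          · have k := hKEYz 1 (by norm_num); norm_num at k; omega
          · have k := hKEYz 1 (by norm_num); norm_num at k; omega
        · push_neg at hd6
          exact stmt12_real_case 8 d M g (113/25) 7 (by norm_num) (by norm_num)
            (le_of_lt (stmt12_g_lb 8 g (113/25) hg1 hg (by norm_num) (by norm_num)))
            (by norm_num) (by exact_mod_cast hd6) (by norm_num) (by norm_num) hg hgM hKEY
      · -- s = 9
        by_cases hd4 : d ≤ 4
        · have hub : g < 34/7 :=
            stmt12_g_ub 9 g (34/7) hg1 hg (by norm_num) (by norm_num) (by norm_num)
          have hMlin : 63*d < 34*M := by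
            have hM0R : (0:ℝ) ≤ (M:ℝ) := Nat.cast_nonneg M
            have h1 : g*(M:ℝ) ≤ (34/7)*(M:ℝ) := mul_le_mul_of_nonneg_right (le_of_lt hub) hM0R
            have h2 : (63:ℝ)*(d:ℝ) < 34*(M:ℝ) := by push_cast at hgM; linarith
            exact_mod_cast h2
          interval_cases d
          · have k := hKEYz 0 (by norm_num); norm_num at k; omega
        · push_neg at hd4
          exact stmt12_real_case 9 d M g (241/50) 5 (by norm_num) (by norm_num)
            (le_of_lt (stmt12_g_lb 9 g (241/50) hg1 hg (by norm_num) (by norm_num)))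
            (by norm_num) (by exact_mod_cast hd4) (by norm_num) (by norm_num) hg hgM hKEY
      · -- s = 10
        exact stmt12_real_case 10 d M g (51/10) 4 (by norm_num) (by norm_num)
          (le_of_lt (stmt12_g_lb 10 g (51/10) hg1 hg (by norm_num) (by norm_num)))
          (by norm_num) (by exact_mod_cast hd3) (by norm_num) (by norm_num) hg hgM hKEY
      · -- s = 11
        exact stmt12_real_case 11 d M g (107/20) 4 (by norm_num) (by norm_num)
          (le_of_lt (stmt12_g_lb 11 g (107/20) hg1 hg (by norm_num) (by norm_num)))
          (by norm_num) (by exact_mod_cast hd3) (by norm_num) (by norm_num) hg hgM hKEY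
      · -- s = 12
        exact stmt12_real_case 12 d M g (28/5) 4 (by norm_num) (by norm_num)
          (le_of_lt (stmt12_g_lb 12 g (28/5) hg1 hg (by norm_num) (by norm_num)))
          (by norm_num) (by exact_mod_cast hd3) (by norm_num) (by norm_num) hg hgM hKEY
    · push_neg at hs12
      have hlb : (117/20 : ℝ) < g := by
        apply stmt12_g_lb s g (117/20) hg1 hg (by norm_num)
        have hs13R : (13:ℝ) ≤ (s:ℝ) := by exact_mod_cast hs12
        nlinarith [hs13R]
      exact stmt12_real_case s d M g (117/20) 4 hs (by norm_num) (le_of_lt hlb)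
        (by norm_num) (by exact_mod_cast hd3) (by norm_num) (by norm_num) hg hgM hKEY
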